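/- For every integer d ≥ 2, there exists a strictly decreasing sequence (A_q) of sets of integers with empty intersection such that for every h ≥ 1, the intersection over q of the h-fold sumsets hA_q is empty if and only if d does not divide h. -/

import Mathlib

open Pointwise

/-- The `h`-fold sumset: all sums of `h` not necessarily distinct elements of `S`
(for `h ≥ 1`; by convention `hfold 0 S = S`). -/
def hfold {α : Type*} [Add α] : ℕ → Set α → Set α
  | 0, S => S
  | 1, S => S
  | n + 2, S => hfold (n + 1) S + S

namespace Stmt16Aux

/-- Encoding of the elements of our sets: `(k, true) ↦ (k+1)!`,
`(k, false) ↦ -(d-1)·(k+1)!`. -/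
def T (d : ℕ) (p : ℕ × Bool) : ℤ :=
  if p.2 then ((p.1 + 1).factorial : ℤ) else -((d : ℤ) - 1) * ((p.1 + 1).factorial : ℤ)

/-- The sets `A d q`. -/
def A (d q : ℕ) : Set ℤ := { x | ∃ k, q ≤ k ∧ ∃ s : Bool, x = T d (k, s) }

lemma fact_one_le (k : ℕ) : (1 : ℤ) ≤ ((k + 1).factorial : ℤ) := by
  exact_mod_cast Nat.one_le_iff_ne_zero.mpr (Nat.factorial_ne_zero _)

lemma fact_pos (k : ℕ) : (0 : ℤ) < ((k + 1).factorial : ℤ) := by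
  exact_mod_cast Nat.factorial_pos _

lemma abs_T_le {d : ℕ} (hd : 2 ≤ d) (p : ℕ × Bool) :
    |T d p| ≤ ((d : ℤ) - 1) * ((p.1 + 1).factorial : ℤ) := by
  have h1 : (1 : ℤ) ≤ (d : ℤ) - 1 := by
    have : (2 : ℤ) ≤ d := by exact_mod_cast hd
    linarith
  have h2 := fact_one_le p.1
  cases hp : p.2
  · have : T d p = -(((d : ℤ) - 1) * ((p.1 + 1).factorial : ℤ)) := by
      simp [T, hp]; ring
    rw [this, abs_neg, abs_of_nonneg (by nlinarith : (0:ℤ) ≤ ((d:ℤ)-1) * ((p.1+1).factorial : ℤ))]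
  · have : T d p = ((p.1 + 1).factorial : ℤ) := by simp [T, hp]
    rw [this, abs_of_nonneg (by linarith : (0:ℤ) ≤ ((p.1+1).factorial : ℤ))]
    nlinarith

lemma abs_T_ge {d : ℕ} (hd : 2 ≤ d) (p : ℕ × Bool) :
    ((p.1 + 1).factorial : ℤ) ≤ |T d p| := by
  have h1 : (1 : ℤ) ≤ (d : ℤ) - 1 := by
    have : (2 : ℤ) ≤ d := by exact_mod_cast hd
    linarith
  have h2 := fact_one_le p.1
  cases hp : p.2
  · have h4 : T d p = -(((d : ℤ) - 1) * ((p.1 + 1).factorial : ℤ)) := by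
      simp [T, hp]; ring
    rw [h4, abs_neg, abs_of_nonneg (by nlinarith : (0:ℤ) ≤ ((d:ℤ)-1) * ((p.1+1).factorial : ℤ))]
    nlinarith
  · have h4 : T d p = ((p.1 + 1).factorial : ℤ) := by simp [T, hp]
    rw [h4, abs_of_nonneg (by linarith : (0:ℤ) ≤ ((p.1+1).factorial : ℤ))]

/-- Membership in `hfold (n+1) S` as a multiset sum. -/
lemma hfold_mem {S : Set ℤ} : ∀ n : ℕ, ∀ x : ℤ,
    x ∈ hfold (n + 1) S ↔
      ∃ M : Multiset ℤ, M.card = n + 1 ∧ (∀ y ∈ M, y ∈ S) ∧ M.sum = x := by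
  intro n
  induction n with
  | zero =>
    intro x
    constructor
    · intro hx
      exact ⟨{x}, by simp, by simpa [hfold] using hx, by simp⟩
    · rintro ⟨M, hc, hmem, hsum⟩
      have h1 : Multiset.card M = 1 := by simpa using hc
      obtain ⟨y, hy⟩ := Multiset.card_eq_one.mp h1
      subst hy
      have h2 : y = x := by simpa using hsum
      subst h2
      show y ∈ S
      exact hmem y (by simp)
  | succ n ih =>
    intro x
    have hdef : hfold (n + 2) S = hfold (n + 1) S + S := rfl
    constructor
    · intro hx
      rw [hdef] at hx
      obtain ⟨a, ha, b, hb, hab⟩ := Set.mem_add.mp hx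
      obtain ⟨M, hc, hmem, hsum⟩ := (ih a).mp ha
      refine ⟨b ::ₘ M, by simp [hc], ?_, by simp [hsum, ← hab]; ring⟩
      intro y hy
      rcases Multiset.mem_cons.mp hy with rfl | hy
      · exact hb
      · exact hmem y hy
    · rintro ⟨M, hc, hmem, hsum⟩
      have hM : M ≠ 0 := by
        intro h0; rw [h0] at hc; simp at hc
      obtain ⟨b, hb⟩ := Multiset.exists_mem_of_ne_zero hM
      have hM' : M = b ::ₘ M.erase b := (Multiset.cons_erase hb).symm
      rw [hdef]
      refine Set.mem_add.mpr ⟨(M.erase b).sum, ?_, b, hmem b hb, ?_⟩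
      · refine (ih _).mpr ⟨M.erase b, ?_, ?_, rfl⟩
        · have := Multiset.card_erase_of_mem hb
          rw [this, hc]; rfl
        · intro y hy; exact hmem y (Multiset.mem_of_mem_erase hy)
      · rw [hM'] at hsum; simp at hsum; linarith [hsum]

/-- Lift a multiset of elements of `A d q` to a multiset of codes. -/
lemma lift (d q : ℕ) : ∀ M : Multiset ℤ, (∀ y ∈ M, y ∈ A d q) →
    ∃ N : Multiset (ℕ × Bool), N.card = M.card ∧ (∀ p ∈ N, q ≤ p.1) ∧
      (N.map (T d)).sum = M.sum := by
  intro M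
  induction M using Multiset.induction_on with
  | empty => intro _; exact ⟨0, by simp, by simp, by simp⟩
  | cons y M ih =>
    intro hmem
    obtain ⟨N, hc, hq, hsum⟩ := ih fun z hz => hmem z (Multiset.mem_cons_of_mem hz)
    obtain ⟨k, hk, s, hy⟩ := hmem y (Multiset.mem_cons_self _ _)
    refine ⟨(k, s) ::ₘ N, by simp [hc], ?_, by simp [hsum, hy]⟩
    intro p hp
    rcases Multiset.mem_cons.mp hp with rfl | hp
    · exact hk
    · exact hq p hp

set_option maxHeartbeats 1000000 in
/-- Key lemma: a fixed integer `v` representable as a sum of `n ≤ H` encoded elements,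
all with index at least `(d-1)*H + v.natAbs + 1`, forces `d ∣ n`. -/
lemma key (d : ℕ) (hd : 2 ≤ d) (v : ℤ) (H : ℕ) :
    ∀ n : ℕ, ∀ M : Multiset (ℕ × Bool), M.card = n → n ≤ H →
      (∀ p ∈ M, (d - 1) * H + v.natAbs + 1 ≤ p.1) →
      (M.map (T d)).sum = v → d ∣ n := by
  intro n
  induction n using Nat.strong_induction_on with
  | _ n ih =>
  intro M hcard hH hq hsum
  rcases Nat.eq_zero_or_pos n with rfl | hn
  · exact dvd_zero d
  set q : ℕ := (d - 1) * H + v.natAbs + 1 with hqdef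
  have hM0 : M ≠ 0 := by
    intro h0; rw [h0] at hcard; simp at hcard; omega
  -- the maximal index K
  have hFne : (M.toFinset.image Prod.fst).Nonempty := by
    obtain ⟨p, hp⟩ := Multiset.exists_mem_of_ne_zero hM0
    exact ⟨p.1, Finset.mem_image.mpr ⟨p, Multiset.mem_toFinset.mpr hp, rfl⟩⟩
  obtain ⟨K, ⟨p₀, hp₀M, hp₀K⟩, hub⟩ :
      ∃ K : ℕ, (∃ p ∈ M, p.1 = K) ∧ ∀ p ∈ M, p.1 ≤ K := by
    refine ⟨(M.toFinset.image Prod.fst).max' hFne, ?_, ?_⟩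
    · have := (M.toFinset.image Prod.fst).max'_mem hFne
      obtain ⟨p, hp, hpk⟩ := Finset.mem_image.mp this
      exact ⟨p, Multiset.mem_toFinset.mp hp, hpk⟩
    · intro p hp
      exact Finset.le_max' _ _ (Finset.mem_image.mpr ⟨p, Multiset.mem_toFinset.mpr hp, rfl⟩)
  have hqK : q ≤ K := hp₀K ▸ hq p₀ hp₀M
  -- decompose M
  classical
  set M1 : Multiset (ℕ × Bool) := M.filter (fun p => p.1 = K) with hM1def
  set M2 : Multiset (ℕ × Bool) := M.filter (fun p => ¬ p.1 = K) with hM2def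
  have hsplit : M1 + M2 = M := Multiset.filter_add_not _ M
  set P : ℕ := M.count (K, true) with hPdef
  set m : ℕ := M.count (K, false) with hmdef
  have hM1 : M1 = Multiset.replicate P (K, true) + Multiset.replicate m (K, false) := by
    have h1 : M.filter (fun p => p = (K, true)) = Multiset.replicate P (K, true) := by
      rw [hPdef]; exact Multiset.filter_eq' M (K, true)
    have h2 : M.filter (fun p => p = (K, false)) = Multiset.replicate m (K, false) := by
      rw [hmdef]; exact Multiset.filter_eq' M (K, false)
    rw [hM1def, ← h1, ← h2, Multiset.filter_add_filter]
    have e1 : M.filter (fun a => a = (K, true) ∨ a = (K, false)) =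
        M.filter (fun p => p.1 = K) := by
      apply Multiset.filter_congr
      intro p _
      constructor
      · rintro (rfl | rfl) <;> rfl
      · intro hp
        rcases p with ⟨k, s⟩
        simp only at hp
        subst hp
        cases s
        · right; rfl
        · left; rfl
    have e2 : M.filter (fun a => a = (K, true) ∧ a = (K, false)) = 0 := by
      rw [Multiset.filter_eq_nil]
      rintro a _ ⟨rfl, h⟩
      simp at h
    rw [e1, e2, add_zero]
  have hcard1 : M1.card = P + m := by rw [hM1]; simp
  have hcardsplit : P + m + M2.card = n := by
    rw [← hcard, ← hsplit, Multiset.card_add, hcard1]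
  have hM1pos : 1 ≤ P + m := by
    have : p₀ ∈ M1 := by
      rw [hM1def, Multiset.mem_filter]
      exact ⟨hp₀M, hp₀K⟩
    have := Multiset.card_pos_iff_exists_mem.mpr ⟨p₀, this⟩
    omega
  -- sums
  have hsum1 : (M1.map (T d)).sum
      = ((P : ℤ) - ((d : ℤ) - 1) * m) * ((K + 1).factorial : ℤ) := by
    rw [hM1]
    simp [Multiset.map_add, Multiset.map_replicate, Multiset.sum_replicate, T]
    ring
  -- bound on the small part
  have hsum2bound : |(M2.map (T d)).sum| ≤ ((d : ℤ) - 1) * (K.factorial : ℤ) * M2.card := by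
    have hK1 : 1 ≤ K := le_trans (by omega) hqK
    have hbound : ∀ y ∈ (M2.map (T d)).map abs, y ≤ ((d : ℤ) - 1) * (K.factorial : ℤ) := by
      intro y hy
      rw [Multiset.map_map] at hy
      obtain ⟨p, hp, rfl⟩ := Multiset.mem_map.mp hy
      have hpM : p ∈ M := Multiset.mem_of_mem_filter hp
      have hpK : p.1 ≠ K := by
        have := Multiset.mem_filter.mp hp
        exact this.2
      have hple : p.1 + 1 ≤ K := by
        have := hub p hpM
        omega
      have hfle : ((p.1 + 1).factorial : ℤ) ≤ (K.factorial : ℤ) := by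
        exact_mod_cast Nat.factorial_le hple
      calc (abs ∘ T d) p = |T d p| := rfl
        _ ≤ ((d : ℤ) - 1) * ((p.1 + 1).factorial : ℤ) := abs_T_le hd p
        _ ≤ ((d : ℤ) - 1) * (K.factorial : ℤ) := by
            have h1 : (1 : ℤ) ≤ (d : ℤ) - 1 := by
              have : (2 : ℤ) ≤ d := by exact_mod_cast hd
              linarith
            nlinarith
    calc |(M2.map (T d)).sum| ≤ ((M2.map (T d)).map abs).sum :=
            Multiset.abs_sum_le_sum_abs
      _ ≤ ((M2.map (T d)).map abs).card • (((d : ℤ) - 1) * (K.factorial : ℤ)) :=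
            Multiset.sum_le_card_nsmul _ _ hbound
      _ = ((d : ℤ) - 1) * (K.factorial : ℤ) * M2.card := by
            simp [mul_comm]
  -- the coefficient at level K vanishes
  set cK : ℤ := (P : ℤ) - ((d : ℤ) - 1) * m with hcKdef
  have hsumsplit : cK * ((K + 1).factorial : ℤ) + (M2.map (T d)).sum = v := by
    rw [← hsum, ← hsplit, Multiset.map_add, Multiset.sum_add, hsum1]
  have hfactK : ((K + 1).factorial : ℤ) = (K + 1) * (K.factorial : ℤ) := by
    exact_mod_cast Nat.factorial_succ K
  have hcK0 : cK = 0 := by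
    by_contra hne
    have h1 : (1 : ℤ) ≤ |cK| := by
      rcases lt_or_gt_of_ne hne with h | h
      · rw [abs_of_neg h]; omega
      · rw [abs_of_pos h]; omega
    have hKfpos : (0 : ℤ) < (K.factorial : ℤ) := by
      exact_mod_cast Nat.factorial_pos K
    have hKf1 : (1 : ℤ) ≤ (K.factorial : ℤ) := hKfpos
    have habs : |cK| * ((K + 1).factorial : ℤ) ≤ |v| + |(M2.map (T d)).sum| := by
      have : cK * ((K + 1).factorial : ℤ) = v - (M2.map (T d)).sum := by linarith
      calc |cK| * ((K + 1).factorial : ℤ) = |cK * ((K + 1).factorial : ℤ)| := by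
            rw [abs_mul, abs_of_pos (fact_pos K)]
        _ = |v - (M2.map (T d)).sum| := by rw [this]
        _ ≤ |v| + |(M2.map (T d)).sum| := by
              have := abs_add_le v (-(M2.map (T d)).sum)
              simpa [sub_eq_add_neg] using this
    have hvle : |v| ≤ (v.natAbs : ℤ) * (K.factorial : ℤ) := by
      have habs : |v| = (v.natAbs : ℤ) := Int.abs_eq_natAbs v
      nlinarith [(by exact_mod_cast Nat.zero_le v.natAbs : (0:ℤ) ≤ ((v.natAbs : ℕ) : ℤ))]
    have hM2le : (M2.card : ℤ) ≤ ((d - 1 : ℕ) : ℤ) * H + v.natAbs := by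
      have hMc : M2.card ≤ n := by omega
      have : (M2.card : ℤ) ≤ (H : ℤ) := by exact_mod_cast le_trans hMc hH
      have hd1H : (1 : ℤ) ≤ ((d - 1 : ℕ) : ℤ) := by
        have : 1 ≤ d - 1 := by omega
        exact_mod_cast this
      have hHn : (0 : ℤ) ≤ (H : ℤ) := by exact_mod_cast Nat.zero_le H
      nlinarith [(by exact_mod_cast Nat.zero_le v.natAbs : (0:ℤ) ≤ ((v.natAbs : ℕ) : ℤ))]
    have hdcast : ((d - 1 : ℕ) : ℤ) = (d : ℤ) - 1 := by
      have : 1 ≤ d := by omega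
      push_cast [this]; ring
    have hqKZ : ((q : ℕ) : ℤ) ≤ (K : ℤ) := by exact_mod_cast hqK
    have hqZ : ((q : ℕ) : ℤ) = ((d - 1 : ℕ) : ℤ) * H + v.natAbs + 1 := by
      rw [hqdef]; push_cast; ring
    have hd1 : (1 : ℤ) ≤ (d : ℤ) - 1 := by
      have : (2 : ℤ) ≤ d := by exact_mod_cast hd
      linarith
    -- |cK| * (K+1)! ≥ (K+1)! = (K+1) * K!
    have hrhs : |v| + |(M2.map (T d)).sum| < ((K : ℤ) + 1) * (K.factorial : ℤ) := by
      have h2 := hsum2bound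
      have hM2n : (0 : ℤ) ≤ (M2.card : ℤ) := by exact_mod_cast Nat.zero_le _
      have : |v| + |(M2.map (T d)).sum|
          ≤ (v.natAbs : ℤ) * (K.factorial : ℤ)
            + ((d : ℤ) - 1) * (K.factorial : ℤ) * M2.card := by linarith
      have hstep : (v.natAbs : ℤ) + ((d : ℤ) - 1) * M2.card < (K : ℤ) + 1 := by
        have : ((d : ℤ) - 1) * M2.card ≤ ((d : ℤ) - 1) * H := by
          have hMc : (M2.card : ℤ) ≤ (H : ℤ) := by
            have : M2.card ≤ n := by omega
            exact_mod_cast le_trans this hH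
          nlinarith
        have : (v.natAbs : ℤ) + ((d : ℤ) - 1) * M2.card
            ≤ (v.natAbs : ℤ) + ((d : ℤ) - 1) * H := by linarith
        have hqle : ((d : ℤ) - 1) * H + v.natAbs + 1 ≤ (K : ℤ) := by
          rw [← hdcast, ← hqZ]; exact hqKZ
        linarith
      nlinarith
    have hlhs : ((K : ℤ) + 1) * (K.factorial : ℤ) ≤ |cK| * ((K + 1).factorial : ℤ) := by
      rw [hfactK]
      have hKf : (0 : ℤ) < (K.factorial : ℤ) := by exact_mod_cast Nat.factorial_pos K
      have hK0 : (0 : ℤ) ≤ (K : ℤ) := by exact_mod_cast Nat.zero_le K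
      nlinarith
    linarith

  -- conclude
  have hPm : P = (d - 1) * m := by
    have : (P : ℤ) = ((d : ℤ) - 1) * m := by
      rw [hcKdef] at hcK0; linarith
    have hdcast : ((d - 1 : ℕ) : ℤ) = (d : ℤ) - 1 := by
      have : 1 ≤ d := by omega
      push_cast [this]; ring
    exact_mod_cast hdcast ▸ this
  have hfiber : P + m = d * m := by
    rw [hPm, Nat.sub_one_mul]
    have h1 : m ≤ d * m := Nat.le_mul_of_pos_left m (by omega)
    omega
  have hrec : d ∣ M2.card := by
    apply ih M2.card (by omega) M2 rfl (by omega)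
    · intro p hp
      exact hq p (Multiset.mem_of_mem_filter hp)
    · rw [hcK0] at hsumsplit
      simpa using hsumsplit
  have : n = d * m + M2.card := by omega
  rw [this]
  exact Dvd.dvd.add (Dvd.intro m rfl) hrec

end Stmt16Aux

theorem stmt16 (d : ℕ) (hd : 2 ≤ d) :
    ∃ Aq : ℕ → Set ℤ,
      (∀ q, Aq (q + 1) ⊂ Aq q) ∧ (⋂ q, Aq q) = ∅ ∧
      (∀ h : ℕ, 1 ≤ h → ((⋂ q, hfold h (Aq q)) = ∅ ↔ ¬ d ∣ h)) := by
  classical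
  open Stmt16Aux in
  refine ⟨A d, ?_, ?_, ?_⟩
  · -- strictly decreasing
    intro q
    constructor
    · rintro x ⟨k, hk, s, rfl⟩
      exact ⟨k, by omega, s, rfl⟩
    · intro hsub
      have hx : (((q + 1).factorial : ℤ)) ∈ A d (q + 1) := by
        apply hsub
        exact ⟨q, le_refl q, true, by simp [T]⟩
      obtain ⟨k, hk, s, hT⟩ := hx
      cases s with
      | true =>
        simp only [T, if_true] at hT
        have : (q + 1).factorial = (k + 1).factorial := by exact_mod_cast hT
        have hlt : (q + 1).factorial < (k + 1).factorial :=
          (Nat.factorial_lt (by omega)).mpr (by omega)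
        omega
      | false =>
        simp only [T] at hT
        norm_num at hT
        have h1 : (1 : ℤ) ≤ (d : ℤ) - 1 := by
          have : (2 : ℤ) ≤ d := by exact_mod_cast hd
          linarith
        have h2 := fact_one_le k
        have h3 := fact_one_le q
        nlinarith
  · -- empty intersection
    rw [Set.eq_empty_iff_forall_notMem]
    intro x hx
    have hq : ∀ q : ℕ, (q : ℤ) + 1 ≤ |x| := by
      intro q
      have hxq := Set.mem_iInter.mp hx q
      obtain ⟨k, hk, s, rfl⟩ := hxq
      have h1 := abs_T_ge hd (k, s)
      have h2 : ((k : ℤ) + 1) ≤ ((k + 1).factorial : ℤ) := by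
        exact_mod_cast Nat.self_le_factorial (k + 1)
      have h3 : (q : ℤ) ≤ (k : ℤ) := by exact_mod_cast hk
      simp only at h1 h2
      linarith
    have := hq x.natAbs
    rw [Int.abs_eq_natAbs] at this
    omega
  · -- the sumset condition
    intro h hh
    obtain ⟨n, rfl⟩ : ∃ n, h = n + 1 := ⟨h - 1, by omega⟩
    constructor
    · -- empty intersection implies ¬ d ∣ h
      intro hempty hdvd
      obtain ⟨m, hm⟩ := hdvd
      have hm1 : 1 ≤ m := by
        rcases Nat.eq_zero_or_pos m with rfl | h; · omega
        · exact h
      have h0 : (0 : ℤ) ∈ ⋂ q, hfold (n + 1) (A d q) := by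
        rw [Set.mem_iInter]
        intro q
        rw [hfold_mem]
        refine ⟨Multiset.replicate ((d - 1) * m) (((q + 1).factorial : ℤ))
          + Multiset.replicate m (-((d : ℤ) - 1) * ((q + 1).factorial : ℤ)), ?_, ?_, ?_⟩
        · simp only [Multiset.card_add, Multiset.card_replicate]
          have h1 : m ≤ d * m := Nat.le_mul_of_pos_left m (by omega)
          rw [Nat.sub_one_mul]
          omega
        · intro y hy
          rcases Multiset.mem_add.mp hy with hy | hy
          · rw [Multiset.eq_of_mem_replicate hy]
            exact ⟨q, le_refl q, true, by simp [T]⟩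
          · rw [Multiset.eq_of_mem_replicate hy]
            exact ⟨q, le_refl q, false, by simp [T]⟩
        · simp only [Multiset.sum_add, Multiset.sum_replicate, smul_eq_mul, nsmul_eq_mul]
          have hdcast : (((d - 1) * m : ℕ) : ℤ) = ((d : ℤ) - 1) * m := by
            have : 1 ≤ d := by omega
            push_cast [this]; ring
          rw [hdcast]; ring
      rw [hempty] at h0
      exact h0
    · -- ¬ d ∣ h implies empty intersection
      intro hndvd
      rw [Set.eq_empty_iff_forall_notMem]
      intro v hv
      set q : ℕ := (d - 1) * (n + 1) + v.natAbs + 1 with hqdef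
      have hvq := Set.mem_iInter.mp hv q
      rw [hfold_mem] at hvq
      obtain ⟨M, hc, hmem, hsum⟩ := hvq
      obtain ⟨N, hNc, hNq, hNsum⟩ := lift d q M hmem
      have : d ∣ n + 1 := by
        apply key d hd v (n + 1) (n + 1) N (by rw [hNc, hc]) (le_refl _)
        · intro p hp; exact hNq p hp
        · rw [hNsum, hsum]
      exact hndvd this
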